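/- arXiv:2501.16569 — 2 statements merged into one kernel-verified Lean document; each statement's English description precedes it below -/
import Mathlib

section
/- For every real number α with 0 ≤ α < 1, the Wright-type series M_α(z) = Σ_{n=0}^∞ (−z)^n / (n! Γ(−αn + 1 − α)) converges absolutely for every z ∈ ℂ (so M_α defines an entire function on ℂ). Here terms with −αn + 1 − α a nonpositive integer are interpreted as 0 (equivalently, 1/Γ is the entire reciprocal Gamma function). -/
open scoped Real

/-- Reflection-formula bound on the reciprocal Gamma function. -/
lemma gammaInv_norm_le (x : ℝ) (hx : 0 < 1 - x) :
    ‖(Complex.Gamma ((x : ℝ) : ℂ))⁻¹‖ ≤ Real.Gamma (1 - x) / Real.pi := by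
  have hG1 : 0 < Real.Gamma (1 - x) := Real.Gamma_pos_of_pos hx
  rw [Complex.Gamma_ofReal, norm_inv, Complex.norm_real, Real.norm_eq_abs]
  rcases eq_or_ne (Real.Gamma x) 0 with h | h
  · rw [h, abs_zero, inv_zero]
    positivity
  · have hrefl := Real.Gamma_mul_Gamma_one_sub x
    have hsin : Real.sin (Real.pi * x) ≠ 0 := by
      intro h0
      rw [h0, div_zero] at hrefl
      exact (mul_ne_zero h hG1.ne') hrefl
    have key : (Real.Gamma x)⁻¹ = Real.Gamma (1 - x) * Real.sin (Real.pi * x) / Real.pi := by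
      have hmul : Real.Gamma x * Real.Gamma (1 - x) * Real.sin (Real.pi * x) = Real.pi := by
        rw [hrefl, div_mul_cancel₀ _ hsin]
      field_simp
      rw [mul_comm x Real.pi]
      linarith [hmul]
    rw [← abs_inv, key, abs_div, abs_mul, abs_of_pos hG1, abs_of_pos Real.pi_pos]
    have hs : |Real.sin (Real.pi * x)| ≤ 1 :=
      abs_le.mpr ⟨Real.neg_one_le_sin _, Real.sin_le_one _⟩
    calc Real.Gamma (1 - x) * |Real.sin (Real.pi * x)| / Real.pi
        ≤ Real.Gamma (1 - x) * 1 / Real.pi := by gcongr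
      _ = Real.Gamma (1 - x) / Real.pi := by ring

/-- The key summability estimate for the Wright series. -/
lemma wright_summable (α : ℝ) (hα0 : 0 ≤ α) (hα1 : α < 1) (r : ℝ) (hr : 0 ≤ r) :
    Summable fun n : ℕ =>
      r ^ n / (n.factorial : ℝ) * ‖(Complex.Gamma ((-α * n + 1 - α : ℝ) : ℂ))⁻¹‖ := by
  rcases eq_or_lt_of_le hα0 with h0 | hα
  · -- α = 0
    subst h0
    have : ∀ n : ℕ, ((-(0:ℝ) * n + 1 - 0 : ℝ) : ℂ) = 1 := by
      intro n; norm_num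
    simp only [this, Complex.Gamma_one, inv_one, norm_one, mul_one]
    exact Real.summable_pow_div_factorial r
  · -- 0 < α < 1
    set c : ℝ := 1 - α with hc_def
    have hc : 0 < c := by simp only [hc_def]; linarith
    set s : ℝ := max r 1 with hs_def
    have hs1 : (1:ℝ) ≤ s := le_max_right _ _
    have hs0 : (0:ℝ) < s := lt_of_lt_of_le one_pos hs1
    have hrs : r ≤ s := le_max_left _ _
    set R : ℝ := (2 * s) ^ (2 / c) with hR_def
    have hR1 : (1:ℝ) ≤ R := Real.one_le_rpow (by linarith) (by positivity)
    have hR0 : (0:ℝ) < R := lt_of_lt_of_le one_pos hR1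
    set N : ℕ := max ⌈2 / α⌉₊ ⌈2 * (α + 1) / c⌉₊ with hN_def
    set C : ℝ := Real.exp R / Real.pi with hC_def
    have hC0 : 0 ≤ C := by positivity
    -- key pointwise bound
    have key : ∀ n : ℕ, N ≤ n →
        r ^ n / (n.factorial : ℝ) * ‖(Complex.Gamma ((-α * n + 1 - α : ℝ) : ℂ))⁻¹‖
          ≤ C * (1 / 2) ^ n := by
      intro n hn
      have hNn : (N : ℝ) ≤ n := Nat.cast_le.mpr hn
      have hn1 : 2 ≤ α * (n + 1) := by
        have h1 : 2 / α ≤ (⌈2 / α⌉₊ : ℝ) := Nat.le_ceil _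
        have h2 : ((⌈2 / α⌉₊ : ℕ) : ℝ) ≤ N := Nat.cast_le.mpr (le_max_left _ _)
        have h3 : 2 / α ≤ (n : ℝ) := by linarith
        have h4 : 2 ≤ α * n := by
          rw [div_le_iff₀ hα] at h3; linarith [h3]
        nlinarith
      have hn2 : α + 1 ≤ c / 2 * n := by
        have h1 : 2 * (α + 1) / c ≤ (⌈2 * (α + 1) / c⌉₊ : ℝ) := Nat.le_ceil _
        have h2 : ((⌈2 * (α + 1) / c⌉₊ : ℕ) : ℝ) ≤ N := Nat.cast_le.mpr (le_max_right _ _)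
        have h3 : 2 * (α + 1) / c ≤ (n : ℝ) := by linarith
        rw [div_le_iff₀ hc] at h3
        nlinarith
      set k : ℕ := ⌈α * (n + 1)⌉₊ with hk_def
      have hk_ge : α * (n + 1) ≤ (k : ℝ) := Nat.le_ceil _
      have hk_le : (k : ℝ) ≤ α * (n + 1) + 1 := (Nat.ceil_lt_add_one (by positivity)).le
      have hcn : c * n = n - α * n := by rw [hc_def]; ring
      have hkR : (k : ℝ) ≤ (n : ℝ) - c / 2 * n := by nlinarith
      have hkn : k ≤ n := by
        have : (k : ℝ) ≤ (n : ℝ) := by nlinarith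
        exact_mod_cast this
      have hnkR : c / 2 * n ≤ ((n - k : ℕ) : ℝ) := by
        rw [Nat.cast_sub hkn]; linarith
      -- Step A: reciprocal Gamma bound
      have hA : ‖(Complex.Gamma ((-α * n + 1 - α : ℝ) : ℂ))⁻¹‖
          ≤ Real.Gamma (α * (n + 1)) / Real.pi := by
        have hx : (1:ℝ) - (-α * n + 1 - α) = α * (n + 1) := by ring
        have := gammaInv_norm_le (-α * n + 1 - α) (by rw [hx]; linarith)
        rwa [hx] at this
      -- Step B: Gamma ≤ k!
      have hB : Real.Gamma (α * (n + 1)) ≤ (k.factorial : ℝ) := by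
        have hmem1 : α * (n + 1) ∈ Set.Ici (2:ℝ) := Set.mem_Ici.mpr hn1
        have hmem2 : ((k : ℝ) + 1) ∈ Set.Ici (2:ℝ) := Set.mem_Ici.mpr (by linarith)
        have := Real.Gamma_strictMonoOn_Ici.monotoneOn hmem1 hmem2 (by linarith)
        rwa [Real.Gamma_nat_eq_factorial] at this
      -- Step C: k!/n! ≤ 1/(n-k)!
      have hC2 : (k.factorial : ℝ) / (n.factorial : ℝ)
          ≤ 1 / (((n - k).factorial : ℕ) : ℝ) := by
        rw [div_le_div_iff₀ (by positivity) (by positivity)]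
        have hd := Nat.le_of_dvd n.factorial_pos
          (Nat.factorial_mul_factorial_dvd_factorial hkn)
        calc (k.factorial : ℝ) * ((n - k).factorial : ℝ)
            = ((k.factorial * (n - k).factorial : ℕ) : ℝ) := by push_cast; ring
          _ ≤ (n.factorial : ℝ) := by exact_mod_cast hd
          _ = 1 * (n.factorial : ℝ) := by ring
      -- Step D: 1/(n-k)! ≤ exp R / R^(n-k)
      have hD : (1 : ℝ) / (((n - k).factorial : ℕ) : ℝ)
          ≤ Real.exp R / R ^ (n - k) := by
        rw [div_le_div_iff₀ (by positivity) (by positivity)]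
        have h5 := Real.pow_div_factorial_le_exp R hR0.le (n - k)
        rw [div_le_iff₀ (by positivity)] at h5
        linarith
      -- Step E: (2s)^n ≤ R^(n-k)
      have hE : (2 * s) ^ n ≤ R ^ (n - k) := by
        have e1 : ((2 * s) : ℝ) ^ n = (2 * s) ^ ((n : ℕ) : ℝ) := (Real.rpow_natCast _ n).symm
        have e2 : (R : ℝ) ^ (n - k) = R ^ (((n - k : ℕ)) : ℝ) := (Real.rpow_natCast _ _).symm
        have e4 : (2 / c) * (c / 2 * (n : ℝ)) = ((n : ℕ) : ℝ) := by
          field_simp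
        have e3 : R ^ (c / 2 * (n : ℝ)) = (2 * s) ^ ((n : ℕ) : ℝ) := by
          rw [hR_def, ← Real.rpow_mul (by positivity), e4]
        rw [e1, e2, ← e3]
        exact Real.rpow_le_rpow_of_exponent_le hR1 hnkR
      calc r ^ n / (n.factorial : ℝ) * ‖(Complex.Gamma ((-α * n + 1 - α : ℝ) : ℂ))⁻¹‖
          ≤ r ^ n / (n.factorial : ℝ) * (Real.Gamma (α * (n + 1)) / Real.pi) := by
            gcongr
        _ ≤ s ^ n / (n.factorial : ℝ) * ((k.factorial : ℝ) / Real.pi) := by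
            gcongr
        _ = s ^ n * ((k.factorial : ℝ) / (n.factorial : ℝ)) / Real.pi := by ring
        _ ≤ s ^ n * (1 / (((n - k).factorial : ℕ) : ℝ)) / Real.pi := by gcongr
        _ ≤ s ^ n * (Real.exp R / R ^ (n - k)) / Real.pi := by gcongr
        _ ≤ s ^ n * (Real.exp R / (2 * s) ^ n) / Real.pi := by
            gcongr
        _ = C * (1 / 2) ^ n := by
            rw [hC_def, mul_pow, div_pow, one_pow]
            field_simp
    -- conclude summability from the tail bound
    rw [← summable_nat_add_iff N]
    have hsum : Summable fun n : ℕ => C * ((1:ℝ) / 2) ^ (n + N) := by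
      simp_rw [pow_add]
      exact (((summable_geometric_of_lt_one (by norm_num) (by norm_num)).mul_right
        _).mul_left C)
    refine hsum.of_nonneg_of_le (fun n => by positivity) (fun n => ?_)
    exact key (n + N) (Nat.le_add_left _ _)

/-- The Wright-type function `M_α(z) = ∑_{n=0}^∞ (−z)^n / (n! Γ(−αn + 1 − α))`,
where `1/Γ` is the entire reciprocal Gamma function (Mathlib's `Complex.Gamma`
vanishes at the nonpositive integers, so `(Complex.Gamma w)⁻¹` is the entire
reciprocal Gamma function). -/
noncomputable def wrightM (α : ℝ) (z : ℂ) : ℂ :=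
  ∑' n : ℕ, (-z) ^ n / (n.factorial : ℂ) * (Complex.Gamma ((-α * n + 1 - α : ℝ) : ℂ))⁻¹

/-- For every real `0 ≤ α < 1`, the Wright-type series converges absolutely for
every `z ∈ ℂ`, so `M_α` defines an entire function on `ℂ`. -/
theorem wrightM_abs_convergent_entire (α : ℝ) (hα0 : 0 ≤ α) (hα1 : α < 1) :
    (∀ z : ℂ, Summable fun n : ℕ =>
        ‖(-z) ^ n / (n.factorial : ℂ) * (Complex.Gamma ((-α * n + 1 - α : ℝ) : ℂ))⁻¹‖) ∧
      Differentiable ℂ (wrightM α) := by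
  have hnorm : ∀ (z : ℂ) (n : ℕ),
      ‖(-z) ^ n / (n.factorial : ℂ) * (Complex.Gamma ((-α * n + 1 - α : ℝ) : ℂ))⁻¹‖
        = ‖z‖ ^ n / (n.factorial : ℝ) * ‖(Complex.Gamma ((-α * n + 1 - α : ℝ) : ℂ))⁻¹‖ := by
    intro z n
    rw [norm_mul, norm_div, norm_pow, norm_neg, Complex.norm_natCast]
  constructor
  · intro z
    have := wright_summable α hα0 hα1 ‖z‖ (norm_nonneg z)
    refine this.congr fun n => ?_
    exact (hnorm z n).symm
  · intro z₀
    have hopen : IsOpen (Metric.ball (0:ℂ) (‖z₀‖ + 1)) := Metric.isOpen_ball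
    have hmem : z₀ ∈ Metric.ball (0:ℂ) (‖z₀‖ + 1) := by
      simp only [Metric.mem_ball, dist_zero_right]
      linarith
    have hsum := wright_summable α hα0 hα1 (‖z₀‖ + 1) (by positivity)
    have hd : DifferentiableOn ℂ
        (fun w : ℂ => ∑' n : ℕ,
          (-w) ^ n / (n.factorial : ℂ) * (Complex.Gamma ((-α * n + 1 - α : ℝ) : ℂ))⁻¹)
        (Metric.ball (0:ℂ) (‖z₀‖ + 1)) := by
      refine Complex.differentiableOn_tsum_of_summable_norm hsum (fun n => ?_) hopen
        (fun n w hw => ?_)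
      · apply Differentiable.differentiableOn
        fun_prop
      · rw [hnorm w n]
        have hw' : ‖w‖ ≤ ‖z₀‖ + 1 := by
          have := Metric.mem_ball.mp hw
          rw [dist_zero_right] at this
          exact this.le
        gcongr
    exact (hd z₀ hmem).differentiableAt (hopen.mem_nhds hmem)
end

section
/- Let 0 < α < 1 and λ ≥ 0, and define u(t) = E_α(−λ t^α) for t ≥ 0. Then u(0) = 1, u is differentiable on (0, +∞), and for every t > 0 the Djrbashian–Caputo fractional derivative of u exists and satisfies (^C∂_t^α u)(t) := (1/Γ(1−α)) ∫_0^t (t − s)^{−α} u′(s) ds = −λ u(t). -/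
open MeasureTheory intervalIntegral
open scoped ENNReal NNReal

/-- The Mittag-Leffler function `E_α(x) = ∑_{k=0}^∞ x^k / Γ(αk + 1)` for real `x`. -/
noncomputable def mittagLefflerReal (α : ℝ) (x : ℝ) : ℝ :=
  ∑' k : ℕ, x ^ k / Real.Gamma (α * k + 1)

namespace MLAux

lemma gamma_convex_ineq {α : ℝ} (hα0 : 0 < α) (hα1 : α < 1) {x : ℝ} (hx : 0 < x) :
    x * Real.Gamma x ≤ Real.Gamma (x + α) * (x + α) ^ (1 - α) := by
  have hxα : 0 < x + α := by linarith
  have hxα1 : 0 < x + α + 1 := by linarith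
  have hkey := Real.convexOn_log_Gamma.2 (Set.mem_Ioi.2 hxα) (Set.mem_Ioi.2 hxα1)
    hα0.le (by linarith : (0:ℝ) ≤ 1 - α) (by ring)
  have hpt : α • (x + α) + (1 - α) • (x + α + 1) = x + 1 := by
    simp only [smul_eq_mul]; ring
  rw [hpt] at hkey
  simp only [Function.comp_apply, smul_eq_mul] at hkey
  have hG1 : Real.Gamma (x + α + 1) = (x + α) * Real.Gamma (x + α) :=
    Real.Gamma_add_one hxα.ne'
  have hGpos : 0 < Real.Gamma (x + α) := Real.Gamma_pos_of_pos hxα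
  have hGx1 : Real.Gamma (x + 1) = x * Real.Gamma x := Real.Gamma_add_one hx.ne'
  have hGx1pos : 0 < Real.Gamma (x + 1) := Real.Gamma_pos_of_pos (by linarith)
  rw [hG1, Real.log_mul hxα.ne' hGpos.ne'] at hkey
  have hkey2 : Real.log (Real.Gamma (x + 1)) ≤
      Real.log (Real.Gamma (x + α)) + (1 - α) * Real.log (x + α) := by nlinarith
  have hrhs : Real.Gamma (x + α) * (x + α) ^ (1 - α) =
      Real.exp (Real.log (Real.Gamma (x + α)) + (1 - α) * Real.log (x + α)) := by
    rw [Real.exp_add, Real.exp_log hGpos, Real.rpow_def_of_pos hxα, mul_comm (1-α)]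
  rw [← hGx1, hrhs, ← Real.exp_log hGx1pos]
  exact Real.exp_le_exp.2 hkey2

lemma summable_gamma {α : ℝ} (hα0 : 0 < α) (hα1 : α < 1) {C r : ℝ} (hC : 0 ≤ C) (hr : 0 < r) :
    Summable (fun k : ℕ => C ^ k / Real.Gamma (α * k + r)) := by
  rcases eq_or_lt_of_le hC with h0 | hCpos
  · rw [← summable_nat_add_iff 1]
    apply Summable.congr summable_zero
    intro k
    rw [← h0, zero_pow (Nat.succ_ne_zero k), zero_div]
  · apply summable_of_ratio_norm_eventually_le (r := 1/2) (by norm_num)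
    have htend : Filter.Tendsto (fun k : ℕ => (α * k + r) * (α * k + r + α) ^ (α - 1))
        Filter.atTop Filter.atTop := by
      have hy : Filter.Tendsto (fun k : ℕ => α * k + r + α) Filter.atTop Filter.atTop := by
        apply Filter.tendsto_atTop_add_const_right
        apply Filter.tendsto_atTop_add_const_right
        exact (tendsto_natCast_atTop_atTop (R := ℝ)).const_mul_atTop hα0
      have h2 : Filter.Tendsto (fun k : ℕ => (α * k + r + α) ^ α / 2) Filter.atTop
          Filter.atTop := ((tendsto_rpow_atTop hα0).comp hy).atTop_div_const two_pos
      apply Filter.tendsto_atTop_mono' _ _ h2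
      filter_upwards [hy.eventually_ge_atTop (2 * α)] with k hk
      have hk0 : (0:ℝ) ≤ α * k := by positivity
      have hypos : (0:ℝ) < α * k + r + α := by linarith
      have hxge : (α * k + r + α) / 2 ≤ α * k + r := by linarith
      have hpow : (α * k + r + α) ^ α = (α * k + r + α) * (α * k + r + α) ^ (α - 1) := by
        nth_rewrite 2 [← Real.rpow_one (α * k + r + α)]
        rw [← Real.rpow_add hypos]; ring_nf
      have hp2 : (0:ℝ) < (α * k + r + α) ^ (α - 1) := Real.rpow_pos_of_pos hypos _
      calc (α * k + r + α) ^ α / 2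
          = ((α * k + r + α) / 2) * (α * k + r + α) ^ (α - 1) := by rw [hpow]; ring
        _ ≤ (α * k + r) * (α * k + r + α) ^ (α - 1) :=
            mul_le_mul_of_nonneg_right hxge hp2.le
    filter_upwards [htend.eventually_ge_atTop (2 * C)] with k hk
    have hk0 : (0:ℝ) ≤ α * k := by positivity
    set x := α * k + r with hx
    have hxpos : 0 < x := by rw [hx]; linarith
    have hxa : 0 < x + α := by linarith
    have hGx : 0 < Real.Gamma x := Real.Gamma_pos_of_pos hxpos
    have hGxa : 0 < Real.Gamma (x + α) := Real.Gamma_pos_of_pos hxa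
    have hconv := gamma_convex_ineq hα0 hα1 hxpos
    have hpowinv : (x + α) ^ (1 - α) * (x + α) ^ (α - 1) = 1 := by
      rw [← Real.rpow_add hxa]; norm_num
    have hp2 : (0:ℝ) < (x + α) ^ (α - 1) := Real.rpow_pos_of_pos hxa _
    have hmain : 2 * C * Real.Gamma x ≤ Real.Gamma (x + α) := by
      have h1 : 2 * C * Real.Gamma x ≤ x * (x + α) ^ (α - 1) * Real.Gamma x :=
        mul_le_mul_of_nonneg_right hk hGx.le
      have h2 : x * (x + α) ^ (α - 1) * Real.Gamma x
          ≤ Real.Gamma (x + α) * (x + α) ^ (1 - α) * (x + α) ^ (α - 1) := by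
        have := mul_le_mul_of_nonneg_right hconv hp2.le
        nlinarith
      calc 2 * C * Real.Gamma x
          ≤ Real.Gamma (x + α) * ((x + α) ^ (1 - α) * (x + α) ^ (α - 1)) := by
            rw [← mul_assoc]; exact h1.trans h2
        _ = Real.Gamma (x + α) := by rw [hpowinv, mul_one]
    have hcast : α * ((k : ℝ) + 1) + r = x + α := by rw [hx]; ring
    rw [Real.norm_eq_abs, Real.norm_eq_abs, abs_div, abs_div]
    push_cast
    rw [hcast]
    rw [abs_of_pos (pow_pos hCpos _), abs_of_pos (pow_pos hCpos _),
      abs_of_pos hGxa, abs_of_pos hGx]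
    rw [div_le_iff₀ hGxa, pow_succ]
    calc C ^ k * C = 1 / 2 * (C ^ k / Real.Gamma x) * (2 * C * Real.Gamma x) := by
          field_simp
      _ ≤ 1 / 2 * (C ^ k / Real.Gamma x) * Real.Gamma (x + α) := by
          apply mul_le_mul_of_nonneg_left hmain; positivity

noncomputable def mlg (α lam : ℝ) (k : ℕ) (t : ℝ) : ℝ :=
  ((-lam) ^ k / Real.Gamma (α * k + 1)) * t ^ (α * k)

noncomputable def mlg' (α lam : ℝ) (k : ℕ) (t : ℝ) : ℝ :=
  ((-lam) ^ k / Real.Gamma (α * k + 1)) * (α * k * t ^ (α * k - 1))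

lemma summable_B {α : ℝ} (hα0 : 0 < α) (hα1 : α < 1) {D : ℝ} (hD : 0 ≤ D) :
    Summable (fun k : ℕ => α * k * D ^ k / Real.Gamma (α * k + 1)) := by
  rw [← summable_nat_add_iff 1]
  apply Summable.congr ((summable_gamma hα0 hα1 hD hα0).mul_left D)
  intro k
  have hG : 0 < Real.Gamma (α * k + α) := Real.Gamma_pos_of_pos (by positivity)
  have hne : α * ((k : ℝ) + 1) ≠ 0 := by positivity
  push_cast
  rw [show α * ((k : ℝ) + 1) + 1 = (α * ((k:ℝ) + 1)) + 1 by ring,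
    Real.Gamma_add_one hne, show α * ((k:ℝ) + 1) = α * k + α by ring]
  rw [pow_succ]
  field_simp

lemma mlg_hasDerivAt (α lam : ℝ) (k : ℕ) {y : ℝ} (hy : y ≠ 0) :
    HasDerivAt (mlg α lam k) (mlg' α lam k y) y :=
  (Real.hasDerivAt_rpow_const (Or.inl hy)).const_mul _

lemma u_eq_tsum_mlg (α lam : ℝ) {t : ℝ} (ht : 0 ≤ t) :
    mittagLefflerReal α (-(lam * t ^ α)) = ∑' k, mlg α lam k t := by
  unfold mittagLefflerReal mlg
  congr 1; funext k
  rw [show -(lam * t ^ α) = (-lam) * t ^ α by ring, mul_pow,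
    ← Real.rpow_natCast (t ^ α) k, ← Real.rpow_mul ht]
  ring

lemma mlg'_bound (α lam : ℝ) (hα0 : 0 < α) (hlam : 0 ≤ lam) {a b y : ℝ} (ha : 0 < a)
    (hy : y ∈ Set.Icc a b) (k : ℕ) :
    ‖mlg' α lam k y‖ ≤ (1 / a) * (α * k * (lam * b ^ α) ^ k / Real.Gamma (α * k + 1)) := by
  obtain ⟨hya, hyb⟩ := hy
  have hy0 : 0 < y := lt_of_lt_of_le ha hya
  have hb : 0 < b := lt_of_lt_of_le hy0 hyb
  have hG : 0 < Real.Gamma (α * k + 1) := Real.Gamma_pos_of_pos (by positivity)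
  have hbpow : (lam * b ^ α) ^ k = lam ^ k * b ^ (α * k) := by
    rw [mul_pow, ← Real.rpow_natCast (b ^ α) k, ← Real.rpow_mul hb.le]
  have hyk : y ^ (α * (k:ℝ) - 1) ≤ b ^ (α * k) / a := by
    rw [Real.rpow_sub hy0, Real.rpow_one]
    apply div_le_div₀ (by positivity) _ ha hya
    exact Real.rpow_le_rpow hy0.le hyb (by positivity)
  rw [mlg', norm_mul, norm_div, norm_pow, norm_neg, Real.norm_eq_abs, Real.norm_eq_abs,
    Real.norm_eq_abs, abs_of_nonneg hlam, abs_of_pos hG,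
    abs_of_nonneg (by positivity : (0:ℝ) ≤ α * k * y ^ (α * (k:ℝ) - 1))]
  rw [hbpow]
  calc lam ^ k / Real.Gamma (α * k + 1) * (α * k * y ^ (α * (k:ℝ) - 1))
      ≤ lam ^ k / Real.Gamma (α * k + 1) * (α * k * (b ^ (α * k) / a)) := by
        apply mul_le_mul_of_nonneg_left _ (by positivity)
        exact mul_le_mul_of_nonneg_left hyk (by positivity)
    _ = 1 / a * (α * k * (lam ^ k * b ^ (α * (k:ℝ))) / Real.Gamma (α * k + 1)) := by
        field_simp

lemma summable_mlg_pt {α lam : ℝ} (hα0 : 0 < α) (hα1 : α < 1) (hlam : 0 ≤ lam) {y : ℝ}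
    (hy : 0 ≤ y) : Summable (fun k => mlg α lam k y) := by
  apply Summable.of_norm_bounded (summable_gamma hα0 hα1 (C := lam * y ^ α) (by positivity)
    one_pos)
  intro k
  have hG : 0 < Real.Gamma (α * k + 1) := Real.Gamma_pos_of_pos (by positivity)
  have h1 : (lam * y ^ α) ^ k = lam ^ k * y ^ (α * k) := by
    rw [mul_pow, ← Real.rpow_natCast (y ^ α) k, ← Real.rpow_mul hy]
  rw [mlg, norm_mul, norm_div, norm_pow, norm_neg, Real.norm_eq_abs, Real.norm_eq_abs,
    Real.norm_eq_abs, abs_of_nonneg hlam, abs_of_pos hG,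
    abs_of_nonneg (Real.rpow_nonneg hy _), h1]
  rw [div_mul_eq_mul_div]

lemma hasDerivAt_u {α lam : ℝ} (hα0 : 0 < α) (hα1 : α < 1) (hlam : 0 ≤ lam) {t₀ : ℝ}
    (ht₀ : 0 < t₀) :
    HasDerivAt (fun t => mittagLefflerReal α (-(lam * t ^ α))) (∑' k, mlg' α lam k t₀) t₀ := by
  have ha : 0 < t₀ / 2 := by linarith
  have hb : (0:ℝ) ≤ lam * (2 * t₀) ^ α := by positivity
  have key := hasDerivAt_tsum_of_isPreconnected
    ((summable_B hα0 hα1 hb).mul_left (1 / (t₀ / 2)))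
    isOpen_Ioo (convex_Ioo (t₀ / 2) (2 * t₀)).isPreconnected
    (fun k y hy => mlg_hasDerivAt α lam k (ne_of_gt (lt_trans ha hy.1)))
    (fun k y hy => mlg'_bound α lam hα0 hlam ha ⟨hy.1.le, hy.2.le⟩ k)
    (show t₀ ∈ Set.Ioo (t₀ / 2) (2 * t₀) by constructor <;> linarith)
    (summable_mlg_pt hα0 hα1 hlam ht₀.le)
    (show t₀ ∈ Set.Ioo (t₀ / 2) (2 * t₀) by constructor <;> linarith)
  apply key.congr_of_eventuallyEq
  filter_upwards [isOpen_Ioi.mem_nhds (Set.mem_Ioi.2 ht₀)] with t ht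
  exact u_eq_tsum_mlg α lam (le_of_lt ht)

lemma deriv_u_eq {α lam : ℝ} (hα0 : 0 < α) (hα1 : α < 1) (hlam : 0 ≤ lam) {s : ℝ}
    (hs : 0 < s) :
    deriv (fun r => mittagLefflerReal α (-(lam * r ^ α))) s = ∑' k, mlg' α lam k s :=
  (hasDerivAt_u hα0 hα1 hlam hs).deriv

lemma summable_norm_mlg' {α lam : ℝ} (hα0 : 0 < α) (hα1 : α < 1) (hlam : 0 ≤ lam) {s : ℝ}
    (hs : 0 < s) : Summable (fun k => ‖mlg' α lam k s‖) := by
  have ha : 0 < s / 2 := by linarith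
  apply Summable.of_norm_bounded
    ((summable_B hα0 hα1 (D := lam * (2 * s) ^ α) (by positivity)).mul_left (1 / (s / 2)))
  intro k
  rw [norm_norm]
  exact mlg'_bound α lam hα0 hlam ha ⟨by linarith, by linarith⟩ k

lemma u_zero {α lam : ℝ} (hα0 : 0 < α) :
    mittagLefflerReal α (-(lam * (0:ℝ) ^ α)) = 1 := by
  rw [Real.zero_rpow hα0.ne', mul_zero, neg_zero, mittagLefflerReal]
  rw [tsum_eq_single 0 (fun k hk => by rw [zero_pow hk, zero_div])]
  norm_num [Real.Gamma_one]

lemma beta_integrable {p q : ℝ} (hp : -1 < p) (hq : -1 < q) {t : ℝ} (ht : 0 < t) :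
    IntervalIntegrable (fun s => s ^ p * (t - s) ^ q) volume 0 t := by
  have h1 : IntervalIntegrable (fun s => s ^ p * (t - s) ^ q) volume 0 (t / 2) := by
    apply (intervalIntegral.intervalIntegrable_rpow' hp).mul_continuousOn
    apply ContinuousOn.rpow_const (continuous_const.sub continuous_id).continuousOn
    intro x hx
    rw [Set.uIcc_of_le (by linarith : (0:ℝ) ≤ t / 2)] at hx
    left
    simp only [Pi.sub_apply, id_eq]
    intro h
    have h2 := hx.2
    rw [sub_eq_zero] at h
    rw [← h] at h2
    linarith
  have h2 : IntervalIntegrable (fun s => s ^ p * (t - s) ^ q) volume (t / 2) t := by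
    have hbase : IntervalIntegrable (fun s => (t - s) ^ q) volume (t / 2) t := by
      have := (intervalIntegral.intervalIntegrable_rpow' hq (a := 0) (b := t / 2)).comp_sub_left t
      rw [sub_zero, sub_half] at this
      exact this.symm
    apply hbase.continuousOn_mul
    apply ContinuousOn.rpow_const continuous_id.continuousOn
    intro x hx
    rw [Set.uIcc_of_le (by linarith : t / 2 ≤ t)] at hx
    left
    simp only [id_eq]
    intro h
    have := hx.1
    rw [h] at this; linarith
  exact h1.trans h2

lemma beta_value {α β t : ℝ} (hα0 : 0 < α) (hα1 : α < 1) (hβ : 0 < β) (ht : 0 < t) :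
    ∫ s in (0:ℝ)..t, s ^ (β - 1) * (t - s) ^ (-α) =
      Real.Gamma β * Real.Gamma (1 - α) / Real.Gamma (β + (1 - α)) * t ^ (β - α) := by
  have h1α : (0:ℝ) < 1 - α := by linarith
  have hscaled := Complex.betaIntegral_scaled (β : ℂ) ((1 - α : ℝ) : ℂ) ht
  have hint : ∀ x ∈ Set.uIcc (0:ℝ) t,
      ((x : ℂ) ^ ((β:ℂ) - 1) * ((t : ℂ) - x) ^ (((1 - α : ℝ):ℂ) - 1))
        = ((x ^ (β - 1) * (t - x) ^ (-α) : ℝ) : ℂ) := by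
    intro x hx
    rw [Set.uIcc_of_le ht.le] at hx
    have hx0 : (0:ℝ) ≤ x := hx.1
    have htx : (0:ℝ) ≤ t - x := by linarith [hx.2]
    rw [Complex.ofReal_mul, Complex.ofReal_cpow hx0, Complex.ofReal_cpow htx]
    push_cast
    ring_nf
  rw [intervalIntegral.integral_congr hint] at hscaled
  rw [intervalIntegral.integral_ofReal] at hscaled
  have hBeta : Complex.betaIntegral (β : ℂ) ((1 - α : ℝ) : ℂ) =
      ((Real.Gamma β * Real.Gamma (1 - α) / Real.Gamma (β + (1 - α)) : ℝ) : ℂ) := by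
    have hG := Complex.Gamma_mul_Gamma_eq_betaIntegral
      (s := (β : ℂ)) (t := ((1 - α : ℝ) : ℂ)) (by simpa using hβ) (by simpa using h1α)
    have hne : ((Real.Gamma (β + (1 - α)) : ℝ) : ℂ) ≠ 0 := by
      exact_mod_cast (Real.Gamma_pos_of_pos (by linarith : (0:ℝ) < β + (1 - α))).ne'
    push_cast at hG ⊢
    rw [show (1 : ℂ) - (α : ℂ) = ((1 - α : ℝ) : ℂ) by push_cast; ring] at hG ⊢
    rw [show (β : ℂ) + ((1 - α : ℝ) : ℂ) = ((β + (1 - α) : ℝ) : ℂ) by push_cast; ring] at hG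
    rw [Complex.Gamma_ofReal, Complex.Gamma_ofReal, Complex.Gamma_ofReal] at hG
    rw [eq_div_iff hne]
    linear_combination -hG
  have hpow : ((t : ℂ) ^ ((β:ℂ) + ((1 - α : ℝ):ℂ) - 1)) = ((t ^ (β - α) : ℝ) : ℂ) := by
    rw [Complex.ofReal_cpow ht.le]
    congr 1
    push_cast; ring
  rw [hBeta, hpow] at hscaled
  rw [← Complex.ofReal_mul] at hscaled
  have := Complex.ofReal_inj.mp hscaled
  rw [this]; ring

lemma main_integral {α lam : ℝ} (hα0 : 0 < α) (hα1 : α < 1) (hlam : 0 ≤ lam) {t : ℝ}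
    (ht : 0 < t) :
    IntervalIntegrable (fun s => (t - s) ^ (-α) *
        deriv (fun r : ℝ => mittagLefflerReal α (-(lam * r ^ α))) s) volume 0 t ∧
    (∫ s in (0:ℝ)..t, (t - s) ^ (-α) *
        deriv (fun r : ℝ => mittagLefflerReal α (-(lam * r ^ α))) s)
      = -lam * Real.Gamma (1 - α) * mittagLefflerReal α (-(lam * t ^ α)) := by
  set F : ℕ → ℝ → ℝ := fun k s => (t - s) ^ (-α) * mlg' α lam k s with hF
  have hF0 : F 0 = fun _ => (0:ℝ) := by
    funext s; simp [hF, mlg']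
  have hC1 : ∀ k : ℕ, F (k + 1) = fun s =>
      (((-lam) ^ (k + 1) / Real.Gamma (α * ((k:ℝ) + 1) + 1)) * (α * ((k:ℝ) + 1))) *
        (s ^ (α * ((k:ℝ) + 1) - 1) * (t - s) ^ (-α)) := by
    intro k; funext s; simp only [hF, mlg']; push_cast; ring
  have hBetaInt : ∀ k : ℕ,
      IntegrableOn (fun s => s ^ (α * ((k:ℝ) + 1) - 1) * (t - s) ^ (-α)) (Set.Ioo 0 t) volume := by
    intro k
    have hpk : (-1:ℝ) < α * ((k:ℝ) + 1) - 1 := by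
      have : (0:ℝ) < α * ((k:ℝ) + 1) := by positivity
      linarith
    have hqk : (-1:ℝ) < -α := by linarith
    have h := beta_integrable hpk hqk ht
    rw [intervalIntegrable_iff_integrableOn_Ioc_of_le ht.le,
      integrableOn_Ioc_iff_integrableOn_Ioo] at h
    exact h
  have hInt : ∀ k : ℕ, Integrable (F k) (volume.restrict (Set.Ioo (0:ℝ) t)) := by
    intro k
    cases k with
    | zero => rw [hF0]; exact integrable_zero _ _ _
    | succ k => rw [hC1 k]; exact (hBetaInt k).const_mul _
  have hBval : ∀ k : ℕ, (∫ s in Set.Ioo (0:ℝ) t, s ^ (α * ((k:ℝ) + 1) - 1) * (t - s) ^ (-α))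
      = Real.Gamma (α * ((k:ℝ) + 1)) * Real.Gamma (1 - α) / Real.Gamma (α * k + 1)
        * t ^ (α * (k:ℝ)) := by
    intro k
    rw [← integral_Ioc_eq_integral_Ioo, ← intervalIntegral.integral_of_le ht.le]
    rw [beta_value hα0 hα1 (by positivity) ht,
      show α * ((k:ℝ) + 1) + (1 - α) = α * (k:ℝ) + 1 by ring,
      show α * ((k:ℝ) + 1) - α = α * (k:ℝ) by ring]
  have hNormVal : ∀ k : ℕ, (∫ s, ‖F (k + 1) s‖ ∂(volume.restrict (Set.Ioo (0:ℝ) t)))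
      = Real.Gamma (1 - α) * lam * ((lam * t ^ α) ^ k / Real.Gamma (α * k + 1)) := by
    intro k
    have hGa : 0 < Real.Gamma (α * ((k:ℝ) + 1) + 1) := Real.Gamma_pos_of_pos (by positivity)
    have hcong : ∀ s ∈ Set.Ioo (0:ℝ) t, ‖F (k + 1) s‖ =
        ((lam ^ (k + 1) / Real.Gamma (α * ((k:ℝ) + 1) + 1)) * (α * ((k:ℝ) + 1))) *
          (s ^ (α * ((k:ℝ) + 1) - 1) * (t - s) ^ (-α)) := by
      intro s hs
      have h1 : 0 < s := hs.1
      have h2 : 0 < t - s := by have := hs.2; linarith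
      simp only [hC1 k]
      rw [Real.norm_eq_abs, abs_mul, abs_mul, abs_div, abs_pow, abs_neg,
        abs_of_nonneg hlam, abs_of_pos hGa, abs_of_pos (by positivity : (0:ℝ) < α * ((k:ℝ) + 1)),
        abs_of_pos (mul_pos (Real.rpow_pos_of_pos h1 _) (Real.rpow_pos_of_pos h2 _))]
    rw [setIntegral_congr_fun measurableSet_Ioo hcong, MeasureTheory.integral_const_mul, hBval k]
    have hx : α * ((k:ℝ) + 1) ≠ 0 := by positivity
    rw [show α * ((k:ℝ) + 1) + 1 = (α * ((k:ℝ) + 1)) + 1 by ring, Real.Gamma_add_one hx]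
    have hG1 : 0 < Real.Gamma (α * ((k:ℝ) + 1)) := Real.Gamma_pos_of_pos (by positivity)
    have hG2 : 0 < Real.Gamma (α * (k:ℝ) + 1) := Real.Gamma_pos_of_pos (by positivity)
    have hpow : (lam * t ^ α) ^ k = lam ^ k * t ^ (α * (k:ℝ)) := by
      rw [mul_pow, ← Real.rpow_natCast (t ^ α) k, ← Real.rpow_mul ht.le]
    rw [hpow, pow_succ]
    field_simp
  have hIntVal : ∀ k : ℕ, (∫ s, F (k + 1) s ∂(volume.restrict (Set.Ioo (0:ℝ) t)))
      = -lam * Real.Gamma (1 - α) * ((-(lam * t ^ α)) ^ k / Real.Gamma (α * k + 1)) := by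
    intro k
    simp only [hC1 k]
    rw [MeasureTheory.integral_const_mul]
    have hval := hBval k
    rw [show (∫ s in Set.Ioo (0:ℝ) t, s ^ (α * ((k:ℝ) + 1) - 1) * (t - s) ^ (-α)) =
        Real.Gamma (α * ((k:ℝ) + 1)) * Real.Gamma (1 - α) / Real.Gamma (α * k + 1)
          * t ^ (α * (k:ℝ)) from hval]
    have hx : α * ((k:ℝ) + 1) ≠ 0 := by positivity
    rw [show α * ((k:ℝ) + 1) + 1 = (α * ((k:ℝ) + 1)) + 1 by ring, Real.Gamma_add_one hx]
    have hG1 : 0 < Real.Gamma (α * ((k:ℝ) + 1)) := Real.Gamma_pos_of_pos (by positivity)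
    have hG2 : 0 < Real.Gamma (α * (k:ℝ) + 1) := Real.Gamma_pos_of_pos (by positivity)
    have hpow : (-(lam * t ^ α)) ^ k = (-lam) ^ k * t ^ (α * (k:ℝ)) := by
      rw [show -(lam * t ^ α) = (-lam) * t ^ α by ring, mul_pow,
        ← Real.rpow_natCast (t ^ α) k, ← Real.rpow_mul ht.le]
    rw [hpow, pow_succ]
    field_simp
  have hS : Summable (fun k => ∫ s, ‖F k s‖ ∂(volume.restrict (Set.Ioo (0:ℝ) t))) := by
    rw [← summable_nat_add_iff 1]
    apply Summable.congr (((summable_gamma hα0 hα1 (C := lam * t ^ α)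
      (by positivity) one_pos).mul_left (Real.Gamma (1 - α) * lam)))
    intro k
    rw [hNormVal k]
  have hHasSum := MeasureTheory.hasSum_integral_of_summable_integral_norm
    (μ := volume.restrict (Set.Ioo (0:ℝ) t)) hInt hS
  have hSumPt : ∀ s ∈ Set.Ioo (0:ℝ) t, Summable (fun k => F k s) := by
    intro s hs
    exact ((summable_norm_mlg' hα0 hα1 hlam hs.1).of_norm).mul_left _
  have hNormSumPt : ∀ s ∈ Set.Ioo (0:ℝ) t, Summable (fun k => ‖F k s‖) := by
    intro s hs
    have h2 : 0 < t - s := by have := hs.2; linarith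
    apply Summable.congr ((summable_norm_mlg' hα0 hα1 hlam hs.1).mul_left ((t - s) ^ (-α)))
    intro k
    rw [hF]
    rw [norm_mul, Real.norm_eq_abs ((t - s) ^ (-α)),
      abs_of_pos (Real.rpow_pos_of_pos h2 _)]
  have hptw : ∀ s ∈ Set.Ioo (0:ℝ) t,
      (t - s) ^ (-α) * deriv (fun r : ℝ => mittagLefflerReal α (-(lam * r ^ α))) s
        = ∑' k, F k s := by
    intro s hs
    rw [deriv_u_eq hα0 hα1 hlam hs.1, ← tsum_mul_left]
  have hTsumMeas : AEStronglyMeasurable (fun s => ∑' k, F k s)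
      (volume.restrict (Set.Ioo (0:ℝ) t)) := by
    apply aestronglyMeasurable_of_tendsto_ae Filter.atTop
      (f := fun n s => ∑ k ∈ Finset.range n, F k s)
      (fun n => Finset.aestronglyMeasurable_fun_sum _ (fun k _ => (hInt k).1))
    filter_upwards [ae_restrict_mem measurableSet_Ioo] with s hs
    exact (hSumPt s hs).hasSum.tendsto_sum_nat
  have hFin : HasFiniteIntegral (fun s => ∑' k, F k s)
      (volume.restrict (Set.Ioo (0:ℝ) t)) := by
    rw [hasFiniteIntegral_def]
    calc (∫⁻ s, ‖∑' k, F k s‖₊ ∂(volume.restrict (Set.Ioo (0:ℝ) t)))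
        ≤ ∫⁻ s, ∑' k, (‖F k s‖₊ : ℝ≥0∞) ∂(volume.restrict (Set.Ioo (0:ℝ) t)) := by
          apply lintegral_mono_ae
          filter_upwards [ae_restrict_mem measurableSet_Ioo] with s hs
          have hnn : Summable (fun k => ‖F k s‖₊) := by
            rw [← NNReal.summable_coe]
            simpa [coe_nnnorm] using hNormSumPt s hs
          calc (‖∑' k, F k s‖₊ : ℝ≥0∞) ≤ ((∑' k, ‖F k s‖₊ : ℝ≥0) : ℝ≥0∞) :=
                ENNReal.coe_le_coe.2 (nnnorm_tsum_le hnn)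
            _ = ∑' k, (‖F k s‖₊ : ℝ≥0∞) := ENNReal.coe_tsum hnn
      _ = ∑' k, ∫⁻ s, ‖F k s‖₊ ∂(volume.restrict (Set.Ioo (0:ℝ) t)) :=
          lintegral_tsum (fun k => (hInt k).1.enorm)
      _ = ∑' k, ENNReal.ofReal (∫ s, ‖F k s‖ ∂(volume.restrict (Set.Ioo (0:ℝ) t))) := by
          congr 1; funext k
          exact (ofReal_integral_norm_eq_lintegral_enorm (hInt k)).symm
      _ = ENNReal.ofReal (∑' k, ∫ s, ‖F k s‖ ∂(volume.restrict (Set.Ioo (0:ℝ) t))) :=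
          (ENNReal.ofReal_tsum_of_nonneg
            (fun k => integral_nonneg (fun s => norm_nonneg _)) hS).symm
      _ < ⊤ := ENNReal.ofReal_lt_top
  have hTsumInt : Integrable (fun s => ∑' k, F k s) (volume.restrict (Set.Ioo (0:ℝ) t)) :=
    ⟨hTsumMeas, hFin⟩
  have hIntegFull : Integrable (fun s => (t - s) ^ (-α) *
      deriv (fun r : ℝ => mittagLefflerReal α (-(lam * r ^ α))) s)
      (volume.restrict (Set.Ioo (0:ℝ) t)) := by
    apply hTsumInt.congr
    filter_upwards [ae_restrict_mem measurableSet_Ioo] with s hs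
    exact (hptw s hs).symm
  constructor
  · rw [intervalIntegrable_iff_integrableOn_Ioc_of_le ht.le,
      integrableOn_Ioc_iff_integrableOn_Ioo]
    exact hIntegFull
  · rw [intervalIntegral.integral_of_le ht.le, integral_Ioc_eq_integral_Ioo,
      setIntegral_congr_fun measurableSet_Ioo hptw, ← hHasSum.tsum_eq,
      hHasSum.summable.tsum_eq_zero_add]
    have h0 : (∫ s, F 0 s ∂(volume.restrict (Set.Ioo (0:ℝ) t))) = 0 := by
      rw [hF0]; simp
    rw [h0, zero_add, tsum_congr hIntVal, tsum_mul_left, mittagLefflerReal]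

end MLAux

/-- For `0 < α < 1` and `λ ≥ 0`, the function `u(t) = E_α(−λ t^α)` satisfies
`u(0) = 1`, is differentiable on `(0, +∞)`, and solves the fractional ODE
`(^C∂_t^α u)(t) = (1/Γ(1−α)) ∫_0^t (t−s)^{−α} u′(s) ds = −λ u(t)` for `t > 0`,
where the Djrbashian–Caputo fractional derivative exists (the defining integral
is well defined). -/
theorem mittagLeffler_solves_caputo_ode (α lam : ℝ) (hα0 : 0 < α) (hα1 : α < 1)
    (hlam : 0 ≤ lam) :
    (fun t : ℝ => mittagLefflerReal α (-(lam * t ^ α))) 0 = 1 ∧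
    DifferentiableOn ℝ (fun t : ℝ => mittagLefflerReal α (-(lam * t ^ α))) (Set.Ioi 0) ∧
    ∀ t : ℝ, 0 < t →
      IntervalIntegrable
        (fun s => (t - s) ^ (-α) *
          deriv (fun r : ℝ => mittagLefflerReal α (-(lam * r ^ α))) s) volume 0 t ∧
      (1 / Real.Gamma (1 - α)) *
          ∫ s in (0 : ℝ)..t, (t - s) ^ (-α) *
            deriv (fun r : ℝ => mittagLefflerReal α (-(lam * r ^ α))) s =
        -lam * mittagLefflerReal α (-(lam * t ^ α)) := by
  refine ⟨MLAux.u_zero hα0, ?_, ?_⟩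
  · intro t₀ ht₀
    exact ((MLAux.hasDerivAt_u hα0 hα1 hlam (Set.mem_Ioi.1 ht₀)).differentiableAt).differentiableWithinAt
  · intro t ht
    obtain ⟨h1, h2⟩ := MLAux.main_integral hα0 hα1 hlam ht
    refine ⟨h1, ?_⟩
    rw [h2]
    have hG : Real.Gamma (1 - α) ≠ 0 := (Real.Gamma_pos_of_pos (by linarith)).ne'
    field_simp
end
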